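/- Let L be an n-dimensional antisymmetric ℤ_p-algebra and M ⊆ L an n-dimensional subalgebra admitting a simple virtual endomorphism of index p^k. Then L admits a simple virtual endomorphism of index p^k·[L:M]. -/

import Mathlib

theorem stmt14 (p : ℕ) [Fact p.Prime] (n k : ℕ) {L : Type*}
    [AddCommGroup L] [Module ℤ_[p] L] [Module.Free ℤ_[p] L] [Module.Finite ℤ_[p] L]
    (hL : Module.finrank ℤ_[p] L = n)
    (f : L →ₗ[ℤ_[p]] L →ₗ[ℤ_[p]] L) (hanti : ∀ z : L, f z z = 0)
    -- `M` is an `n`-dimensional subalgebra of `L`: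
    (M : Submodule ℤ_[p] L) (hMn : Module.finrank ℤ_[p] M = n)
    (hMsub : ∀ a ∈ M, ∀ c ∈ M, f a c ∈ M)
    -- a simple virtual endomorphism `φ : N → M` of `M` of index `p ^ k`:
    (N : Submodule ℤ_[p] L) (hNM : N ≤ M) (hNn : Module.finrank ℤ_[p] N = n)
    (hNsub : ∀ a ∈ N, ∀ c ∈ N, f a c ∈ N)
    (φ : N →ₗ[ℤ_[p]] L) (hrange : ∀ u : N, φ u ∈ M)
    (hmor : ∀ u v : N, ∀ h : f u v ∈ N, φ ⟨f u v, h⟩ = f (φ u) (φ v))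
    (hidx : N.toAddSubgroup.relIndex M.toAddSubgroup = p ^ k)
    (hsimple : ∀ I : Submodule ℤ_[p] L, I ≤ M → (∀ x ∈ M, ∀ y ∈ I, f x y ∈ I) →
      ∀ hle : I ≤ N, (∀ y (hy : y ∈ I), φ ⟨y, hle hy⟩ ∈ I) → I = ⊥) :
    -- then `L` admits a simple virtual endomorphism of index `p ^ k * [L : M]`:
    ∃ (N' : Submodule ℤ_[p] L) (_ : ∀ a ∈ N', ∀ c ∈ N', f a c ∈ N')
      (φ' : N' →ₗ[ℤ_[p]] L),
      N'.toAddSubgroup.index = p ^ k * M.toAddSubgroup.index ∧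
      (∀ u v : N', ∀ h : f u v ∈ N', φ' ⟨f u v, h⟩ = f (φ' u) (φ' v)) ∧
      ∀ I : Submodule ℤ_[p] L, (∀ x : L, ∀ y ∈ I, f x y ∈ I) →
        ∀ hle : I ≤ N', (∀ y (hy : y ∈ I), φ' ⟨y, hle hy⟩ ∈ I) → I = ⊥ := by
  refine ⟨N, hNsub, φ, ?_, hmor, ?_⟩
  · rw [← hidx, AddSubgroup.relIndex_mul_index (fun x hx => hNM hx)]
  · intro I hI hle hinv
    exact hsimple I (hle.trans hNM) (fun x _ y hy => hI x y hy) hle hinv
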